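/- Let R be a binary relation on a finite set U and M(R) the successor relation matroid. For X ⊆ U, X is a closed set of M(R) (i.e., cl_{M(R)}(X) = X) if and only if for all x ∈ X and all u ∈ U \ X, RS_R(x) ≠ RS_R(u). -/

import Mathlib

def RS {α : Type*} (R : α → α → Prop) (x : α) : Set α := {y | R x y}

def IndepS {α : Type*} (R : α → α → Prop) : Set (Set α) :=
  {X | ∀ x ∈ X, ∀ y ∈ X, x ≠ y → RS R x ≠ RS R y}

noncomputable def rankS {α : Type*} (R : α → α → Prop) (X : Set α) : ℕ :=
  sSup {n : ℕ | ∃ I, I ⊆ X ∧ I ∈ IndepS R ∧ I.ncard = n}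

noncomputable def clS {α : Type*} (R : α → α → Prop) (X : Set α) : Set α :=
  {u | rankS R (insert u X) = rankS R X}

lemma rankS_eq {α : Type*} [Fintype α] (R : α → α → Prop) (X : Set α) :
    rankS R X = (RS R '' X).ncard := by
  apply le_antisymm
  · refine csSup_le ⟨0, ∅, Set.empty_subset X, fun x hx => absurd hx (Set.notMem_empty x), by simp⟩ ?_
    rintro n ⟨I, hIX, hInd, rfl⟩
    have hinj : Set.InjOn (RS R) I := by
      intro a ha b hb hab
      by_contra hne
      exact hInd a ha b hb hne hab
    calc I.ncard = (RS R '' I).ncard := (Set.ncard_image_of_injOn hinj).symm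
      _ ≤ (RS R '' X).ncard :=
        Set.ncard_le_ncard (Set.image_mono hIX) (Set.toFinite _)
  · obtain ⟨I, hIX, hbij⟩ := Set.exists_subset_bijOn X (RS R)
    apply le_csSup
    · refine ⟨(RS R '' X).ncard, ?_⟩
      rintro n ⟨J, hJX, hJnd, rfl⟩
      have hinj : Set.InjOn (RS R) J := by
        intro a ha b hb hab
        by_contra hne
        exact hJnd a ha b hb hne hab
      calc J.ncard = (RS R '' J).ncard := (Set.ncard_image_of_injOn hinj).symm
        _ ≤ (RS R '' X).ncard :=
          Set.ncard_le_ncard (Set.image_mono hJX) (Set.toFinite _)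
    · refine ⟨I, hIX, ?_, ?_⟩
      · intro x hx y hy hne heq
        exact hne (hbij.injOn hx hy heq)
      · calc I.ncard = (RS R '' I).ncard := (Set.ncard_image_of_injOn hbij.injOn).symm
          _ = (RS R '' X).ncard := by rw [hbij.image_eq]

theorem stmt_8 {α : Type*} [Fintype α] (R : α → α → Prop) (X : Set α) :
    clS R X = X ↔ ∀ x ∈ X, ∀ u ∉ X, RS R x ≠ RS R u := by
  have hins : ∀ u, rankS R (insert u X) = (insert (RS R u) (RS R '' X)).ncard := by
    intro u
    rw [rankS_eq, Set.image_insert_eq]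
  constructor
  · intro hcl x hx u hu heq
    apply hu
    rw [← hcl]
    show rankS R (insert u X) = rankS R X
    have hmem : RS R u ∈ RS R '' X := ⟨x, hx, heq⟩
    rw [hins, rankS_eq, Set.insert_eq_self.mpr hmem]
  · intro h
    ext u
    simp only [clS, Set.mem_setOf_eq]
    constructor
    · intro hr
      by_contra hu
      have hnot : RS R u ∉ RS R '' X := by
        rintro ⟨x, hx, hxe⟩
        exact h x hx u hu hxe
      rw [hins, rankS_eq, Set.ncard_insert_of_notMem hnot (Set.toFinite _)] at hr
      omega
    · intro hu
      rw [Set.insert_eq_self.mpr hu]
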